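/- Let f be a 2-periodic function on ℝ that extends to a bounded analytic function in the strip {z : |Im z| < a} with |f| ≤ M there. Then the n-point trapezoidal rule approximation of ∫_{-1}^{1} f(x) dx using equispaced nodes converges exponentially: the error is bounded by 4M/(e^{π a n} − 1) for all n ≥ 1. -/

import Mathlib

set_option maxHeartbeats 1000000

open Real Set Complex intervalIntegral

/-- Shift of contour lemma. -/
lemma trap_shift (g : ℂ → ℂ) (a t : ℝ) (ht : |t| < a)
    (hper : ∀ z : ℂ, g (z + 2) = g z)
    (hdiff : DifferentiableOn ℂ g {z : ℂ | |z.im| < a}) :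
    (∫ x : ℝ in (-1:ℝ)..1, g x) = ∫ x : ℝ in (-1:ℝ)..1, g (x + t * Complex.I) := by
  have key := Complex.integral_boundary_rect_eq_zero_of_differentiableOn g (-1)
    (1 + t * Complex.I) (by
      apply hdiff.mono
      intro z hz
      rw [Complex.mem_reProdIm] at hz
      simp only [Complex.add_im, Complex.one_im, Complex.mul_im, Complex.ofReal_re,
        Complex.I_im, Complex.ofReal_im, Complex.I_re, mul_zero, zero_add, mul_one,
        Complex.neg_im, Complex.one_re, Complex.neg_re, Complex.add_re, Complex.mul_re] at hz
      have h2 := hz.2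
      rw [Set.mem_uIcc] at h2
      have hta := abs_lt.1 ht
      simp only [Set.mem_setOf_eq]
      rcases h2 with ⟨h1, h2⟩ | ⟨h1, h2⟩ <;> rw [abs_lt] <;> constructor <;> linarith)
  simp only [Complex.add_im, Complex.one_im, Complex.mul_im, Complex.ofReal_re, Complex.I_im,
    Complex.ofReal_im, Complex.I_re, mul_zero, zero_add, mul_one, Complex.neg_im,
    Complex.one_im, Complex.one_re, Complex.neg_re, Complex.add_re, Complex.mul_re, neg_zero] at key
  norm_num at key
  have hv : (∫ (y : ℝ) in (0:ℝ)..t, g ((1:ℂ) + y*Complex.I))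
      = ∫ (y : ℝ) in (0:ℝ)..t, g ((-1:ℂ) + y*Complex.I) := by
    apply intervalIntegral.integral_congr
    intro y _
    show g ((1:ℂ) + y*Complex.I) = g ((-1:ℂ) + y*Complex.I)
    rw [← hper ((-1:ℂ) + y*Complex.I)]
    congr 1
    ring
  linear_combination key - Complex.I * hv


lemma trap_coeff_bound_b (f : ℂ → ℂ) (a M : ℝ) (hM : 0 ≤ M)
    (hper : ∀ z : ℂ, f (z + 2) = f z)
    (hdiff : DifferentiableOn ℂ f {z : ℂ | |z.im| < a})
    (hbd : ∀ z : ℂ, |z.im| < a → ‖f z‖ ≤ M) (k : ℤ) (b : ℝ)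
    (hb0 : 0 < b) (hba : b < a) :
    ‖∫ x : ℝ in (-1:ℝ)..1, Complex.exp (-↑π * Complex.I * k * x) * f x‖
      ≤ 2 * M * Real.exp (-(π * b * |(k:ℝ)|)) := by
  have gper : ∀ z : ℂ,
      Complex.exp (-↑π * Complex.I * k * (z + 2)) * f (z + 2)
        = Complex.exp (-↑π * Complex.I * k * z) * f z := by
    intro z
    have h1 : (-↑π * Complex.I * (k:ℂ) * (z + 2))
        = (-↑π * Complex.I * k * z) + ((-k : ℤ) * (2 * ↑π * Complex.I)) := by
      push_cast; ring
    rw [h1, Complex.exp_add, Complex.exp_int_mul_two_pi_mul_I, mul_one, hper]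
  have gdiff : DifferentiableOn ℂ (fun z => Complex.exp (-↑π * Complex.I * k * z) * f z)
      {z : ℂ | |z.im| < a} := by
    apply DifferentiableOn.mul _ hdiff
    apply Differentiable.differentiableOn
    apply Differentiable.cexp
    exact (differentiable_const _).mul differentiable_id
  set t : ℝ := if 0 ≤ k then -b else b with htdef
  have htabs : |t| = b := by
    rcases le_or_gt 0 k with h | h
    · simp [htdef, h, abs_of_pos hb0]
    · simp [htdef, not_le.2 h, abs_of_pos hb0]
  have ht : |t| < a := by rw [htabs]; exact hba
  calc ‖∫ x : ℝ in (-1:ℝ)..1, Complex.exp (-↑π * Complex.I * k * x) * f x‖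
      = ‖∫ x : ℝ in (-1:ℝ)..1,
          Complex.exp (-↑π * Complex.I * k * ((x:ℂ) + t * Complex.I))
            * f ((x:ℂ) + t * Complex.I)‖ := by
        rw [← trap_shift (fun z => Complex.exp (-↑π * Complex.I * k * z) * f z)
          a t ht gper gdiff]
    _ ≤ M * Real.exp (-(π * b * |(k:ℝ)|)) * |(1:ℝ) - (-1)| := by
        apply intervalIntegral.norm_integral_le_of_norm_le_const
        intro x hx
        have him : ((x:ℂ) + t * Complex.I).im = t := by simp
        have hlt : |((x:ℂ) + t * Complex.I).im| < a := by rw [him, htabs]; exact hba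
        have hre : (-↑π * Complex.I * (k:ℂ) * ((x:ℂ) + t * Complex.I)).re = π * k * t := by
          simp [Complex.mul_re, Complex.mul_im]
        have hval : π * (k:ℝ) * t = -(π * b * |(k:ℝ)|) := by
          rcases le_or_gt 0 k with h | h
          · have hk : |(k:ℝ)| = (k:ℝ) := abs_of_nonneg (by exact_mod_cast h)
            simp only [htdef, if_pos h, hk]; ring
          · have hk : |(k:ℝ)| = -(k:ℝ) := abs_of_neg (by exact_mod_cast h)
            simp only [htdef, if_neg (not_le.2 h), hk]; ring
        show ‖Complex.exp (-↑π * Complex.I * k * ((x:ℂ) + t * Complex.I))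
            * f ((x:ℂ) + t * Complex.I)‖ ≤ _
        rw [norm_mul, Complex.norm_exp, hre, hval]
        exact (mul_le_mul_of_nonneg_left (hbd _ hlt)
          (Real.exp_nonneg _)).trans_eq (mul_comm _ _)
    _ = 2 * M * Real.exp (-(π * b * |(k:ℝ)|)) := by norm_num; ring

lemma trap_coeff_bound (f : ℂ → ℂ) (a M : ℝ) (ha : 0 < a) (hM : 0 ≤ M)
    (hper : ∀ z : ℂ, f (z + 2) = f z)
    (hdiff : DifferentiableOn ℂ f {z : ℂ | |z.im| < a})
    (hbd : ∀ z : ℂ, |z.im| < a → ‖f z‖ ≤ M) (k : ℤ) :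
    ‖∫ x : ℝ in (-1:ℝ)..1, Complex.exp (-↑π * Complex.I * k * x) * f x‖
      ≤ 2 * M * Real.exp (-(π * a * |(k:ℝ)|)) := by
  have cont : Filter.Tendsto (fun b : ℝ => 2 * M * Real.exp (-(π * b * |(k:ℝ)|)))
      (nhdsWithin a (Iio a)) (nhds (2 * M * Real.exp (-(π * a * |(k:ℝ)|)))) :=
    ((Continuous.tendsto (by continuity) a)).mono_left nhdsWithin_le_nhds
  apply ge_of_tendsto cont
  filter_upwards [Ioo_mem_nhdsLT ha] with b hb using
    trap_coeff_bound_b f a M hM hper hdiff hbd k b hb.1 hb.2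


lemma trap_node_sum (n : ℕ) (hn : 1 ≤ n) (k : ℤ) :
    ∑ j ∈ Finset.range n, Complex.exp (↑π * Complex.I * k * (-1 + 2 * (j:ℂ) / n))
      = if (n:ℤ) ∣ k then Complex.exp (-↑π * Complex.I * k) * n else 0 := by
  have hn0 : (n:ℂ) ≠ 0 := Nat.cast_ne_zero.2 (by omega)
  have hterm : ∀ j ∈ Finset.range n,
      Complex.exp (↑π * Complex.I * k * (-1 + 2 * (j:ℂ) / n))
        = Complex.exp (-↑π * Complex.I * k) * Complex.exp (2 * ↑π * Complex.I * k / n) ^ j := by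
    intro j _
    rw [← Complex.exp_nat_mul, ← Complex.exp_add]
    congr 1
    field_simp
  rw [Finset.sum_congr rfl hterm, ← Finset.mul_sum]
  rcases em ((n:ℤ) ∣ k) with h | h
  · obtain ⟨m, hm⟩ := h
    have hr : Complex.exp (2 * ↑π * Complex.I * k / n) = 1 := by
      have : (2 * ↑π * Complex.I * (k:ℂ) / n) = (m:ℤ) * (2 * ↑π * Complex.I) := by
        rw [hm]
        push_cast
        field_simp
      rw [this, Complex.exp_int_mul_two_pi_mul_I]
    rw [if_pos ⟨m, hm⟩, hr]
    simp
  · have hr : Complex.exp (2 * ↑π * Complex.I * k / n) ≠ 1 := by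
      intro hc
      rw [Complex.exp_eq_one_iff] at hc
      obtain ⟨m, hm⟩ := hc
      apply h
      refine ⟨m, ?_⟩
      have h2 : (2 * (π:ℂ) * Complex.I) ≠ 0 := by
        simp [Real.pi_ne_zero, Complex.I_ne_zero]
      have : (k:ℂ) = (n:ℂ) * m := by
        apply mul_left_cancel₀ h2
        field_simp at hm
        linear_combination (2 * ↑π * Complex.I) * hm
      exact_mod_cast this
    rw [if_neg h, geom_sum_eq hr]
    rw [← Complex.exp_nat_mul]
    have hexp : (n:ℂ) * (2 * ↑π * Complex.I * k / n) = (k:ℤ) * (2 * ↑π * Complex.I) := by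
      field_simp
    rw [hexp, Complex.exp_int_mul_two_pi_mul_I]
    simp

lemma trap_summable_aux (C r : ℝ) (hr0 : 0 ≤ r) (hr1 : r < 1) :
    Summable (fun k : ℤ => C * r ^ k.natAbs) := by
  apply Summable.of_nat_of_neg <;>
    simpa using (summable_geometric_of_lt_one hr0 hr1).mul_left C

lemma trap_tsum_aux (C r : ℝ) (hC : 0 ≤ C) (hr0 : 0 ≤ r) (hr1 : r < 1) :
    (∑' k : ℤ, (if k = 0 then 0 else C * r ^ k.natAbs)) = 2 * (C * r / (1 - r)) := by
  have hsum : Summable (fun n : ℕ => if n = 0 then (0:ℝ) else C * r ^ n) := by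
    apply Summable.of_nonneg_of_le _ _ ((summable_geometric_of_lt_one hr0 hr1).mul_left C)
    · intro n; split
      · exact le_rfl
      · positivity
    · intro n; split
      · positivity
      · exact le_rfl
  have hval : (∑' n : ℕ, (if n = 0 then (0:ℝ) else C * r ^ n)) = C * r / (1 - r) := by
    rw [Summable.tsum_eq_zero_add hsum]
    have heq : (fun n : ℕ => if n + 1 = 0 then (0:ℝ) else C * r ^ (n+1))
        = fun n : ℕ => (C * r) * r ^ n := by
      funext n; rw [if_neg n.succ_ne_zero, pow_succ]; ring
    rw [heq, tsum_mul_left, tsum_geometric_of_lt_one hr0 hr1, div_eq_mul_inv]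
    norm_num
  have hc1 : ∀ n : ℕ, (if ((n:ℤ)) = 0 then (0:ℝ) else C * r ^ ((n:ℤ)).natAbs)
      = (if n = 0 then (0:ℝ) else C * r ^ n) := by
    intro n
    by_cases hn : n = 0
    · simp [hn]
    · rw [if_neg (by exact_mod_cast hn), if_neg hn, Int.natAbs_natCast]
  have hc2 : ∀ n : ℕ, (if (-(n:ℤ)) = 0 then (0:ℝ) else C * r ^ (-(n:ℤ)).natAbs)
      = (if n = 0 then (0:ℝ) else C * r ^ n) := by
    intro n
    by_cases hn : n = 0
    · simp [hn]
    · rw [if_neg (by simpa using hn), if_neg hn, Int.natAbs_neg, Int.natAbs_natCast]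
  rw [Summable.tsum_of_nat_of_neg (by simpa only [hc1] using hsum) (by simpa only [hc2] using hsum)]
  rw [tsum_congr hc1, tsum_congr hc2, hval]
  norm_num
  ring

theorem trapezoidal_rule_exponential_convergence
    (f : ℂ → ℂ) (a M : ℝ) (ha : 0 < a) (hM : 0 ≤ M)
    (hper : ∀ z : ℂ, f (z + 2) = f z)
    (hdiff : DifferentiableOn ℂ f {z : ℂ | |z.im| < a})
    (hbd : ∀ z : ℂ, |z.im| < a → ‖f z‖ ≤ M) :
    ∀ n : ℕ, 1 ≤ n →
      ‖(∫ x in (-1 : ℝ)..1, f x) -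
          (2 / n) * ∑ j ∈ Finset.range n, f ((-1 : ℂ) + 2 * j / n)‖
        ≤ 4 * M / (Real.exp (π * a * n) - 1) := by
  intro n hn
  haveI : Fact (0 < (2:ℝ)) := ⟨by norm_num⟩
  have hn0 : (n:ℝ) ≠ 0 := Nat.cast_ne_zero.2 (by omega)
  have hnC : (n:ℂ) ≠ 0 := Nat.cast_ne_zero.2 (by omega)
  have hnZ : (n:ℤ) ≠ 0 := by exact_mod_cast Nat.cast_ne_zero.2 (show n ≠ 0 by omega)
  -- the periodic real function
  have hfr : Function.Periodic (fun x : ℝ => f x) 2 := by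
    intro x
    have h := hper (x:ℂ)
    have hc : ((x + 2 : ℝ) : ℂ) = (x:ℂ) + 2 := by push_cast; ring
    simpa [hc] using h
  -- continuity
  have hopen : IsOpen {z : ℂ | |z.im| < a} :=
    isOpen_lt (Complex.continuous_im.abs) continuous_const
  have hcontf : Continuous fun x : ℝ => f x := by
    rw [continuous_iff_continuousAt]
    intro x
    have h1 : ContinuousAt f (x:ℂ) :=
      (hdiff.continuousOn.continuousAt (hopen.mem_nhds (by simp [ha])))
    exact h1.comp Complex.continuous_ofReal.continuousAt
  have hcontF : Continuous hfr.lift := by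
    rw [(QuotientAddGroup.isQuotientMap_mk _).continuous_iff]
    have hc : (hfr.lift ∘ (QuotientAddGroup.mk : ℝ → AddCircle (2:ℝ))) = fun x : ℝ => f x :=
      funext fun x => hfr.lift_coe x
    rw [hc]
    exact hcontf
  set F : C(AddCircle (2:ℝ), ℂ) := ⟨hfr.lift, hcontF⟩ with hFdef
  have hFcoe : ∀ x : ℝ, F ((x : ℝ) : AddCircle (2:ℝ)) = f x := fun x => hfr.lift_coe x
  -- coefficient formula
  have hck : ∀ k : ℤ, fourierCoeff (⇑F) k
      = (1/2 : ℂ) * ∫ x : ℝ in (-1:ℝ)..1, Complex.exp (-↑π * Complex.I * k * x) * f x := by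
    intro k
    rw [fourierCoeff_eq_intervalIntegral (⇑F) k (-1)]
    have hb : (-1 : ℝ) + 2 = 1 := by norm_num
    rw [hb]
    have hc : ∀ x : ℝ, (@fourier (2:ℝ) (-k) (x : AddCircle (2:ℝ))) • F ((x:ℝ) : AddCircle (2:ℝ))
        = Complex.exp (-↑π * Complex.I * k * x) * f x := by
      intro x
      rw [fourier_coe_apply, hFcoe x, smul_eq_mul]
      congr 2
      push_cast
      ring
    rw [intervalIntegral.integral_congr (fun x _ => hc x)]
    rw [Complex.real_smul]
    norm_num
  -- coefficient bound
  have hbound : ∀ k : ℤ, ‖fourierCoeff (⇑F) k‖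
      ≤ M * Real.exp (-(π * a * |(k:ℝ)|)) := by
    intro k
    rw [hck k, norm_mul]
    have h1 : ‖(1/2 : ℂ)‖ = 1/2 := by norm_num
    rw [h1]
    have h2 := trap_coeff_bound f a M ha hM hper hdiff hbd k
    linarith
  set r : ℝ := Real.exp (-(π * a)) with hrdef
  have hr0 : 0 ≤ r := Real.exp_nonneg _
  have hr1 : r < 1 := Real.exp_lt_one_iff.2 (neg_neg_iff_pos.2 (by positivity))
  have hexpk : ∀ k : ℤ, Real.exp (-(π * a * |(k:ℝ)|)) = r ^ k.natAbs := by
    intro k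
    rw [hrdef, ← Real.exp_nat_mul]
    congr 1
    rw [Nat.cast_natAbs, Int.cast_abs]
    ring
  have hsumc : Summable (fourierCoeff (⇑F)) := by
    apply Summable.of_norm
    apply Summable.of_nonneg_of_le (fun k => norm_nonneg _) _ (trap_summable_aux M r hr0 hr1)
    intro k
    rw [← hexpk k]
    exact hbound k
  -- pointwise Fourier expansion
  have hpt : ∀ x : ℝ, HasSum
      (fun k : ℤ => fourierCoeff (⇑F) k * Complex.exp (↑π * Complex.I * k * x)) (f x) := by
    intro x
    have h := has_pointwise_sum_fourier_series_of_summable hsumc ((x:ℝ) : AddCircle (2:ℝ))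
    rw [hFcoe x] at h
    have hfun : (fun k : ℤ => fourierCoeff (⇑F) k • @fourier (2:ℝ) k ((x:ℝ) : AddCircle (2:ℝ)))
        = fun k : ℤ => fourierCoeff (⇑F) k * Complex.exp (↑π * Complex.I * k * x) := by
      funext k
      rw [fourier_coe_apply, smul_eq_mul]
      congr 2
      push_cast
      ring
    rwa [hfun] at h
  -- trapezoid sum identity
  have hnode : ∀ j : ℕ, ((-1:ℂ) + 2*(j:ℂ)/(n:ℂ)) = (((-1 + 2*(j:ℝ)/(n:ℝ)) : ℝ) : ℂ) := by
    intro j; push_cast; ring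
  have hT : ∑ j ∈ Finset.range n, f ((-1:ℂ) + 2*(j:ℂ)/(n:ℂ))
      = ∑' k : ℤ, fourierCoeff (⇑F) k *
          (if (n:ℤ) ∣ k then Complex.exp (-↑π * Complex.I * k) * n else 0) := by
    calc ∑ j ∈ Finset.range n, f ((-1:ℂ) + 2*(j:ℂ)/(n:ℂ))
        = ∑ j ∈ Finset.range n, ∑' k : ℤ, fourierCoeff (⇑F) k *
            Complex.exp (↑π * Complex.I * k * ((-1 + 2*(j:ℝ)/(n:ℝ) : ℝ) : ℂ)) := by
          refine Finset.sum_congr rfl fun j _ => ?_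
          rw [hnode j, ← (hpt _).tsum_eq]
      _ = ∑' k : ℤ, ∑ j ∈ Finset.range n, fourierCoeff (⇑F) k *
            Complex.exp (↑π * Complex.I * k * ((-1 + 2*(j:ℝ)/(n:ℝ) : ℝ) : ℂ)) := by
          exact (Summable.tsum_finsetSum (fun j _ => (hpt _).summable)).symm
      _ = ∑' k : ℤ, fourierCoeff (⇑F) k *
          (if (n:ℤ) ∣ k then Complex.exp (-↑π * Complex.I * k) * n else 0) := by
          refine tsum_congr fun k => ?_
          rw [← Finset.mul_sum]
          congr 1
          rw [← trap_node_sum n hn k]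
          refine Finset.sum_congr rfl fun j _ => ?_
          rw [hnode j]
  -- reindex over multiples of n
  have hinj : Function.Injective (fun m : ℤ => (n:ℤ) * m) :=
    fun x y h => by simpa [hnZ, show n ≠ 0 by omega] using h
  have hsupp : (Function.support fun k : ℤ => fourierCoeff (⇑F) k *
      (if (n:ℤ) ∣ k then Complex.exp (-↑π * Complex.I * k) * (n:ℂ) else 0))
      ⊆ Set.range (fun m : ℤ => (n:ℤ) * m) := by
    intro k hk
    rcases em ((n:ℤ) ∣ k) with h | h
    · obtain ⟨m, hm⟩ := h
      exact ⟨m, hm.symm⟩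
    · simp [h] at hk
  have hre : (∑' k : ℤ, fourierCoeff (⇑F) k *
        (if (n:ℤ) ∣ k then Complex.exp (-↑π * Complex.I * k) * (n:ℂ) else 0))
      = ∑' m : ℤ, fourierCoeff (⇑F) ((n:ℤ)*m) *
          (Complex.exp (-↑π * Complex.I * ((n:ℤ)*m : ℤ)) * (n:ℂ)) := by
    rw [← hinj.tsum_eq hsupp]
    refine tsum_congr fun m => ?_
    rw [if_pos ⟨m, rfl⟩]
  -- the reindexed coefficients
  set S : ℤ → ℂ := fun m => fourierCoeff (⇑F) ((n:ℤ)*m) *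
      Complex.exp (-↑π * Complex.I * (((n:ℤ)*m : ℤ) : ℂ)) with hSdef
  have hnpos : 0 < (n:ℝ) := Nat.cast_pos.2 (by omega)
  set R : ℝ := Real.exp (-(π * a * n)) with hRdef
  have hR0 : 0 ≤ R := Real.exp_nonneg _
  have hR1 : R < 1 := Real.exp_lt_one_iff.2 (neg_neg_iff_pos.2 (by positivity))
  have hSb : ∀ m : ℤ, ‖S m‖ ≤ M * R ^ m.natAbs := by
    intro m
    rw [hSdef]
    simp only [norm_mul]
    have habs1 : ‖Complex.exp (-↑π * Complex.I * ((((n:ℤ)*m : ℤ)):ℂ))‖ = 1 := by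
      rw [Complex.norm_exp]
      have : (-↑π * Complex.I * ((((n:ℤ)*m : ℤ)):ℂ)).re = 0 := by
        simp [Complex.mul_re, Complex.mul_im]
      rw [this, Real.exp_zero]
    rw [habs1, mul_one]
    refine (hbound _).trans (le_of_eq ?_)
    congr 1
    rw [hRdef, ← Real.exp_nat_mul]
    congr 1
    have h1 : |(((n:ℤ)*m : ℤ):ℝ)| = (n:ℝ) * |(m:ℝ)| := by
      push_cast
      rw [abs_mul, _root_.abs_of_nonneg (le_of_lt hnpos)]
    have h2 : ((m.natAbs : ℕ):ℝ) = |(m:ℝ)| := by rw [Nat.cast_natAbs, Int.cast_abs]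
    rw [h1, h2]
    ring
  have hSsum : Summable S := by
    apply Summable.of_norm
    apply Summable.of_nonneg_of_le (fun m => norm_nonneg _) _ (trap_summable_aux M R hR0 hR1)
    intro m
    exact hSb m
  have hS0 : S 0 = fourierCoeff (⇑F) 0 := by
    rw [hSdef]
    simp
  have hint : (∫ x in (-1:ℝ)..1, f x) = 2 * fourierCoeff (⇑F) 0 := by
    rw [hck 0]
    have hc : ∀ x : ℝ, x ∈ Set.uIcc (-1:ℝ) 1 →
        Complex.exp (-↑π * Complex.I * ((0:ℤ):ℂ) * x) * f x = f x := by
      intro x _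
      simp
    rw [intervalIntegral.integral_congr hc]
    ring
  have htrap : (2/(n:ℂ)) * ∑ j ∈ Finset.range n, f ((-1:ℂ) + 2*(j:ℂ)/(n:ℂ))
      = 2 * ∑' m : ℤ, S m := by
    rw [hT, hre]
    have hfun : (fun m : ℤ => fourierCoeff (⇑F) ((n:ℤ)*m) *
        (Complex.exp (-↑π * Complex.I * (((n:ℤ)*m : ℤ):ℂ)) * (n:ℂ)))
        = fun m : ℤ => S m * (n:ℂ) := by
      funext m
      rw [hSdef]
      ring
    rw [hfun, tsum_mul_right]
    field_simp
  -- the tail bound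
  set B : ℤ → ℝ := fun m => if m = 0 then 0 else M * R ^ m.natAbs with hBdef
  have hBsum : Summable B := by
    apply Summable.of_nonneg_of_le _ _ (trap_summable_aux M R hR0 hR1) <;>
      intro m <;> rw [hBdef] <;> dsimp only <;> split
    · exact le_rfl
    · positivity
    · positivity
    · exact le_rfl
  have hE1 : 1 < Real.exp (π * a * n) := Real.one_lt_exp_iff.2 (by positivity)
  have hRE : R * Real.exp (π * a * n) = 1 := by
    rw [hRdef, ← Real.exp_add]
    simp
  have hfinal : ‖(∫ x in (-1:ℝ)..1, f x) -
      (2/(n:ℂ)) * ∑ j ∈ Finset.range n, f ((-1:ℂ) + 2*(j:ℂ)/(n:ℂ))‖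
      = 2 * ‖∑' m : ℤ, if m = 0 then 0 else S m‖ := by
    rw [hint, htrap, Summable.tsum_eq_add_tsum_ite hSsum 0, hS0]
    have : 2 * fourierCoeff (⇑F) 0 - 2 * (fourierCoeff (⇑F) 0 +
        ∑' m : ℤ, if m = 0 then 0 else S m)
        = (-2) * ∑' m : ℤ, if m = 0 then 0 else S m := by ring
    rw [this, norm_mul]
    norm_num
  rw [hfinal]
  have htail : ‖∑' m : ℤ, if m = 0 then 0 else S m‖ ≤ ∑' m : ℤ, B m := by
    apply tsum_of_norm_bounded hBsum.hasSum
    intro m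
    rw [hBdef]
    dsimp only
    split
    · simp
    · exact hSb m
  have hBval : (∑' m : ℤ, B m) = 2 * (M * R / (1 - R)) := trap_tsum_aux M R hM hR0 hR1
  have harith : 2 * (2 * (M * R / (1 - R))) = 4 * M / (Real.exp (π * a * n) - 1) := by
    have h1 : (1:ℝ) - R > 0 := by linarith
    have h2 : Real.exp (π * a * n) - 1 > 0 := by linarith
    have h3 : 2 * (2 * (M * R / (1 - R))) = (4 * M * R) / (1 - R) := by ring
    rw [h3, div_eq_div_iff (ne_of_gt h1) (ne_of_gt h2)]
    linear_combination 4 * M * hRE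
  calc 2 * ‖∑' m : ℤ, if m = 0 then 0 else S m‖
      ≤ 2 * ∑' m : ℤ, B m := by linarith
    _ = 4 * M / (Real.exp (π * a * n) - 1) := by rw [hBval]; exact harith
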